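/- Let (X,T₁,…,T_d) be a minimal ℤ^d-system. Then the action of the group 𝒢_{T₁,…,T_d} on Q_{T₁,…,T_d}(X) is minimal, i.e., every 𝒢_{T₁,…,T_d}-orbit of a point of Q_{T₁,…,T_d}(X) is dense in Q_{T₁,…,T_d}(X). If moreover (X,T₁,…,T_d) is distal, then the action of 𝒢_{T₁,…,T_d} on Q_{T₁,…,T_d}(X) is distal. -/

import Mathlib

open Function Set

/-- The group of self-homeomorphisms of a topological space, under composition. -/
instance homeomorphGroup {X : Type*} [TopologicalSpace X] : Group (X ≃ₜ X) where
  mul f g := g.trans f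
  one := Homeomorph.refl X
  inv := Homeomorph.symm
  mul_assoc _ _ _ := rfl
  one_mul _ := Homeomorph.ext fun _ => rfl
  mul_one _ := Homeomorph.ext fun _ => rfl
  inv_mul_cancel f := Homeomorph.self_trans_symm f

variable {d : ℕ}

/-- The homeomorphism `T₁^{n₁ε₁} ⋯ T_d^{n_dε_d}` associated with `n ∈ ℤ^d` and a vertex
`ε ∈ {0,1}^d` of the cube. -/
def cubeMap {X : Type*} [TopologicalSpace X] (T : Fin d → X ≃ₜ X)
    (n : Fin d → ℤ) (ε : Fin d → Bool) : X ≃ₜ X :=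
  ((List.finRange d).map (fun i => T i ^ (if ε i then n i else 0))).prod

/-- The space of directional dynamical cubes `Q_{T₁,…,T_d}(X)`. -/
def cubes {X : Type*} [TopologicalSpace X] (T : Fin d → X ≃ₜ X) :
    Set ((Fin d → Bool) → X) :=
  closure {y | ∃ (x : X) (n : Fin d → ℤ), ∀ ε, y ε = cubeMap T n ε x}

/-- The group of homeomorphisms generated by `T₁,…,T_d`. -/
def genGroup {X : Type*} [TopologicalSpace X] (T : Fin d → X ≃ₜ X) : Subgroup (X ≃ₜ X) :=
  Subgroup.closure (Set.range T)

/-- Minimality: every orbit is dense. -/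
def IsMinimalSystem {X : Type*} [TopologicalSpace X] (T : Fin d → X ≃ₜ X) : Prop :=
  ∀ x : X, Dense {y : X | ∃ g ∈ genGroup T, g x = y}

/-- Distality: `inf_{g ∈ G} dist (g x) (g y) > 0` whenever `x ≠ y`. -/
def IsDistalSystem {X : Type*} [MetricSpace X] (T : Fin d → X ≃ₜ X) : Prop :=
  ∀ x y : X, x ≠ y → ∃ δ > 0, ∀ g ∈ genGroup T, δ ≤ dist (g x) (g y)

/-- The face transformation `T_j^{[d]}` of the cube space. -/
def faceHomeo {X : Type*} [TopologicalSpace X] (T : Fin d → X ≃ₜ X) (i : Fin d) :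
    ((Fin d → Bool) → X) ≃ₜ ((Fin d → Bool) → X) :=
  Homeomorph.piCongrRight fun ε => if ε i then T i else Homeomorph.refl X

/-- The diagonal transformation `g^{[d]}` of the cube space. -/
def diagHomeo {X : Type*} [TopologicalSpace X] (d : ℕ) (g : X ≃ₜ X) :
    ((Fin d → Bool) → X) ≃ₜ ((Fin d → Bool) → X) :=
  Homeomorph.piCongrRight fun _ => g

/-- The group `𝒢_{T₁,…,T_d}`, generated by the face transformations together with the
diagonal transformations `g^{[d]}`, `g ∈ G`. -/
def cubeGroup {X : Type*} [TopologicalSpace X] (T : Fin d → X ≃ₜ X) :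
    Subgroup (((Fin d → Bool) → X) ≃ₜ ((Fin d → Bool) → X)) :=
  Subgroup.closure
    ({h | ∃ i : Fin d, h = faceHomeo T i} ∪ {h | ∃ g ∈ genGroup T, h = diagHomeo d g})


section Lists
variable {G : Type*} [Group G] {ι : Type*}

lemma list_prod_map_mul (l : List ι) (f g : ι → G) (h : ∀ a b, Commute (f a) (g b)) :
    (l.map fun i => f i * g i).prod = (l.map f).prod * (l.map g).prod := by
  induction l with
  | nil => simp
  | cons i l ih =>
    simp only [List.map_cons, List.prod_cons, ih]
    have hc : Commute ((l.map f).prod) (g i) :=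
      ((Commute.list_prod_right _ _ (fun x hx => by
        obtain ⟨a, _, rfl⟩ := List.mem_map.mp hx
        exact (h a i).symm)).symm)
    calc f i * g i * ((l.map f).prod * (l.map g).prod)
        = f i * ((g i * (l.map f).prod) * (l.map g).prod) := by group
      _ = f i * (((l.map f).prod * g i) * (l.map g).prod) := by rw [hc.symm.eq]
      _ = f i * (l.map f).prod * (g i * (l.map g).prod) := by group

lemma list_prod_map_single (l : List ι) (f : ι → G) (K : ι) (hK : K ∈ l) (hnd : l.Nodup)
    (h1 : ∀ i ∈ l, i ≠ K → f i = 1) : (l.map f).prod = f K := by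
  induction l with
  | nil => simp at hK
  | cons i l ih =>
    simp only [List.map_cons, List.prod_cons]
    rcases List.mem_cons.mp hK with rfl | hKl
    · have : ∀ x ∈ l.map f, x = 1 := by
        intro x hx
        obtain ⟨a, ha, rfl⟩ := List.mem_map.mp hx
        exact h1 a (List.mem_cons_of_mem _ ha) (fun h => (List.nodup_cons.mp hnd).1 (h ▸ ha))
      rw [List.prod_eq_one this, mul_one]
    · have hiK : i ≠ K := fun h => (List.nodup_cons.mp hnd).1 (h ▸ hKl)
      rw [h1 i List.mem_cons_self hiK, one_mul,
        ih hKl (List.nodup_cons.mp hnd).2 (fun j hj => h1 j (List.mem_cons_of_mem _ hj))]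

end Lists

section CubeMapLemmas
variable {X : Type*} [TopologicalSpace X] (T : Fin d → X ≃ₜ X)

lemma commute_T (hcomm : ∀ i j : Fin d, ∀ x : X, T i (T j x) = T j (T i x)) (i j : Fin d) : Commute (T i) (T j) :=
  Homeomorph.ext fun x => (hcomm i j x)

lemma genGroup_commute_T (hcomm : ∀ i j : Fin d, ∀ x : X, T i (T j x) = T j (T i x)) {g : X ≃ₜ X} (hg : g ∈ genGroup T) (i : Fin d) :
    Commute g (T i) := by
  have : genGroup T ≤ Subgroup.centralizer (Set.range T) := by
    rw [genGroup, Subgroup.closure_le]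
    intro a ha
    rw [SetLike.mem_coe, Subgroup.mem_centralizer_iff]
    rintro b ⟨j, rfl⟩
    obtain ⟨k, rfl⟩ := ha
    exact (commute_T T hcomm k j).eq.symm
  exact ((Subgroup.mem_centralizer_iff.mp (this hg)) _ ⟨i, rfl⟩).symm

lemma T_mem_genGroup (i : Fin d) : T i ∈ genGroup T :=
  Subgroup.subset_closure ⟨i, rfl⟩

lemma cubeMap_mem_genGroup (n : Fin d → ℤ) (ε : Fin d → Bool) :
    cubeMap T n ε ∈ genGroup T := by
  refine Subgroup.list_prod_mem _ (fun x hx => ?_)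
  obtain ⟨i, _, rfl⟩ := List.mem_map.mp hx
  exact Subgroup.zpow_mem _ (T_mem_genGroup T i) _

lemma genGroup_commute (hcomm : ∀ i j : Fin d, ∀ x : X, T i (T j x) = T j (T i x)) {g h : X ≃ₜ X} (hg : g ∈ genGroup T) (hh : h ∈ genGroup T) :
    Commute g h := by
  have h1 : ∀ i, Commute g (T i) := genGroup_commute_T T hcomm hg
  -- h in closure: use induction
  refine Subgroup.closure_induction ?_ ?_ ?_ ?_ hh
  · rintro x ⟨i, rfl⟩; exact h1 i
  · exact Commute.one_right g
  · intro a b _ _ ha hb; exact ha.mul_right hb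
  · intro a _ ha; exact ha.inv_right

lemma commute_g_cubeMap (hcomm : ∀ i j : Fin d, ∀ x : X, T i (T j x) = T j (T i x)) {g : X ≃ₜ X} (hg : g ∈ genGroup T) (n : Fin d → ℤ) (ε : Fin d → Bool) :
    Commute g (cubeMap T n ε) :=
  genGroup_commute T hcomm hg (cubeMap_mem_genGroup T n ε)

lemma cubeMap_congr {n n' : Fin d → ℤ} {ε ε' : Fin d → Bool}
    (h : ∀ i, (if ε i then n i else 0) = (if ε' i then n' i else 0)) :
    cubeMap T n ε = cubeMap T n' ε' := by
  unfold cubeMap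
  congr 1
  exact List.map_congr_left (fun i _ => by rw [h i])

lemma cubeMap_zero (ε : Fin d → Bool) : cubeMap T 0 ε = 1 := by
  refine List.prod_eq_one (fun x hx => ?_)
  obtain ⟨i, _, rfl⟩ := List.mem_map.mp hx
  simp

lemma cubeMap_add (hcomm : ∀ i j : Fin d, ∀ x : X, T i (T j x) = T j (T i x)) (n m : Fin d → ℤ) (ε : Fin d → Bool) :
    cubeMap T (n + m) ε = cubeMap T n ε * cubeMap T m ε := by
  unfold cubeMap
  rw [← list_prod_map_mul]
  · refine congrArg _ (List.map_congr_left (fun i _ => ?_))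
    simp only [Pi.add_apply]
    rcases h : ε i with _ | _ <;> simp [zpow_add]
  · intro a b
    exact ((commute_T T hcomm a b).zpow_zpow _ _)
end CubeMapLemmas
section CubeMapMore
variable {X : Type*} [TopologicalSpace X] (T : Fin d → X ≃ₜ X)

/-- the cubeMap with exponent supported at a single coordinate `K` is a single factor -/
lemma cubeMap_single (K : Fin d) (c : ℤ) (ε : Fin d → Bool) :
    cubeMap T (fun i => if i = K then c else 0) ε = T K ^ (if ε K then c else 0) := by
  unfold cubeMap
  have := list_prod_map_single (List.finRange d)
    (fun i => T i ^ (if ε i then (if i = K then c else 0) else 0)) K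
    (List.mem_finRange K) (List.nodup_finRange d) (fun i _ hiK => by simp [hiK, if_neg hiK])
  rw [this]; simp

lemma cubeMap_extract (hcomm : ∀ i j : Fin d, ∀ x : X, T i (T j x) = T j (T i x))
    (n : Fin d → ℤ) (K : Fin d) (ε : Fin d → Bool) :
    cubeMap T n ε = T K ^ (if ε K then n K else 0) * cubeMap T (Function.update n K 0) ε := by
  have hsum : n = (fun i => if i = K then n K else 0) + Function.update n K 0 := by
    funext i
    by_cases h : i = K <;> simp [h, Function.update]
  calc cubeMap T n ε
      = cubeMap T ((fun i => if i = K then n K else 0) + Function.update n K 0) ε := by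
        rw [← hsum]
    _ = _ := by rw [cubeMap_add T hcomm, cubeMap_single]

lemma cubeMap_update_eps (hcomm : ∀ i j : Fin d, ∀ x : X, T i (T j x) = T j (T i x))
    (n : Fin d → ℤ) (K : Fin d) (ε : Fin d → Bool) (b : Bool) :
    cubeMap T n (Function.update ε K b) =
      T K ^ (if b then n K else 0) * cubeMap T (Function.update n K 0) ε := by
  rw [cubeMap_extract T hcomm n K (Function.update ε K b)]
  congr 1
  · simp
  · exact cubeMap_congr T (fun i => by
      by_cases h : i = K
      · subst h; simp
      · simp [Function.update_of_ne h])
end CubeMapMore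

/-- product-space homeomorphism from a family of coordinate homeomorphisms, as a
monoid homomorphism. -/
def bigHomeoM {d : ℕ} {X : Type*} [TopologicalSpace X] :
    ((Fin d → Bool) → X ≃ₜ X) →* (((Fin d → Bool) → X) ≃ₜ ((Fin d → Bool) → X)) where
  toFun f := Homeomorph.piCongrRight f
  map_one' := Homeomorph.ext fun _ => rfl
  map_mul' _ _ := Homeomorph.ext fun _ => rfl

lemma bigHomeoM_apply {X : Type*} [TopologicalSpace X] (f : (Fin d → Bool) → X ≃ₜ X)
    (y : (Fin d → Bool) → X) (ε : Fin d → Bool) :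
    bigHomeoM f y ε = f ε (y ε) := rfl

section GenSet
variable {X : Type*} [TopologicalSpace X] (T : Fin d → X ≃ₜ X)

/-- the explicit version of the cube group restricted to the first `k` directions -/
def genSet (k : ℕ) : Set (((Fin d → Bool) → X) ≃ₜ ((Fin d → Bool) → X)) :=
  {h | ∃ g ∈ genGroup T, ∃ n : Fin d → ℤ, (∀ i : Fin d, k ≤ (i : ℕ) → n i = 0) ∧
    h = bigHomeoM (fun ε => g * cubeMap T n ε)}

/-- generators of the cube set restricted to the first `k` directions -/
def QsetGen (k : ℕ) : Set ((Fin d → Bool) → X) :=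
  {y | ∃ (x : X) (n : Fin d → ℤ), (∀ i : Fin d, k ≤ (i : ℕ) → n i = 0) ∧
    ∀ ε, y ε = cubeMap T n ε x}

/-- the cube set restricted to the first `k` directions -/
def Qset (k : ℕ) : Set ((Fin d → Bool) → X) := closure (QsetGen T k)

variable (hcomm : ∀ i j : Fin d, ∀ x : X, T i (T j x) = T j (T i x))

lemma genSet_one (k : ℕ) : (1 : ((Fin d → Bool) → X) ≃ₜ ((Fin d → Bool) → X)) ∈ genSet T k := by
  refine ⟨1, Subgroup.one_mem _, 0, fun _ _ => rfl, ?_⟩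
  rw [← map_one (bigHomeoM (d := d) (X := X))]
  congr 1
  funext ε
  rw [cubeMap_zero, mul_one]; rfl

lemma genSet_mul {k : ℕ}
    (hcomm : ∀ i j : Fin d, ∀ x : X, T i (T j x) = T j (T i x))
    {a b : ((Fin d → Bool) → X) ≃ₜ ((Fin d → Bool) → X)}
    (ha : a ∈ genSet T k) (hb : b ∈ genSet T k) : a * b ∈ genSet T k := by
  obtain ⟨g, hg, n, hn, rfl⟩ := ha
  obtain ⟨g', hg', n', hn', rfl⟩ := hb
  refine ⟨g * g', Subgroup.mul_mem _ hg hg', n + n',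
    fun i hi => by simp [hn i hi, hn' i hi], ?_⟩
  rw [← map_mul]
  congr 1
  funext ε
  show (g * cubeMap T n ε) * (g' * cubeMap T n' ε) = (g * g') * cubeMap T (n + n') ε
  rw [cubeMap_add T hcomm]
  have hc : Commute (cubeMap T n ε) g' :=
    (genGroup_commute T hcomm hg' (cubeMap_mem_genGroup T n ε)).symm
  rw [mul_assoc, ← mul_assoc (cubeMap T n ε), hc.eq, mul_assoc, ← mul_assoc g]

lemma genSet_inv {k : ℕ}
    (hcomm : ∀ i j : Fin d, ∀ x : X, T i (T j x) = T j (T i x))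
    {a : ((Fin d → Bool) → X) ≃ₜ ((Fin d → Bool) → X)}
    (ha : a ∈ genSet T k) : a⁻¹ ∈ genSet T k := by
  obtain ⟨g, hg, n, hn, rfl⟩ := ha
  refine ⟨g⁻¹, Subgroup.inv_mem _ hg, -n, fun i hi => by simp [hn i hi], ?_⟩
  rw [← map_inv]
  congr 1
  funext ε
  show (g * cubeMap T n ε)⁻¹ = g⁻¹ * cubeMap T (-n) ε
  have h1 : cubeMap T n ε * cubeMap T (-n) ε = 1 := by
    rw [← cubeMap_add T hcomm]; simp [cubeMap_zero]
  have h2 : (cubeMap T n ε)⁻¹ = cubeMap T (-n) ε := by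
    exact inv_eq_of_mul_eq_one_right h1
  rw [mul_inv_rev, h2]
  exact ((genGroup_commute T hcomm (Subgroup.inv_mem _ hg)
    (cubeMap_mem_genGroup T (-n) ε)).eq).symm
end GenSet
section CubeGroupEq
variable {X : Type*} [TopologicalSpace X] (T : Fin d → X ≃ₜ X)

lemma list_prod_pi_apply {ι : Type*} (l : List ι) (F : ι → ((Fin d → Bool) → X ≃ₜ X))
    (ε : Fin d → Bool) : (l.map F).prod ε = (l.map (fun i => F i ε)).prod := by
  induction l with
  | nil => rfl
  | cons i l ih => simp only [List.map_cons, List.prod_cons, Pi.mul_apply, ih]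

lemma faceHomeo_zpow (i : Fin d) (c : ℤ) :
    (faceHomeo T i) ^ c = bigHomeoM (fun ε => T i ^ (if ε i then c else 0)) := by
  have h1 : faceHomeo T i = bigHomeoM (fun ε => T i ^ (if ε i then (1:ℤ) else 0)) := by
    unfold faceHomeo bigHomeoM
    simp only [MonoidHom.coe_mk, OneHom.coe_mk]
    congr 1
    funext ε
    rcases h : ε i with _ | _ <;> simp [h] <;> rfl
  rw [h1, ← map_zpow]
  congr 1
  funext ε
  show (T i ^ (if ε i then (1:ℤ) else 0)) ^ c = T i ^ (if ε i then c else 0)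
  rcases h : ε i with _ | _ <;> simp

lemma genSet_decomp (g : X ≃ₜ X) (n : Fin d → ℤ) :
    bigHomeoM (fun ε => g * cubeMap T n ε) =
      diagHomeo d g * ((List.finRange d).map (fun i => faceHomeo T i ^ (n i))).prod := by
  have h2 : ((List.finRange d).map (fun i => faceHomeo T i ^ (n i))).prod =
      bigHomeoM (((List.finRange d).map
        (fun i => (fun ε => T i ^ (if ε i then n i else 0)))).prod) := by
    rw [map_list_prod, List.map_map]
    congr 1
    exact List.map_congr_left (fun i _ => faceHomeo_zpow T i (n i))
  rw [h2]
  have h3 : diagHomeo d g = bigHomeoM (fun _ => g) := rfl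
  rw [h3, ← map_mul]
  congr 1
  funext ε
  show g * cubeMap T n ε
      = g * ((List.finRange d).map fun i => fun ε => T i ^ (if ε i then n i else 0)).prod ε
  rw [list_prod_pi_apply]
  rfl

lemma genSet_subset_cubeGroup {k : ℕ} {h : ((Fin d → Bool) → X) ≃ₜ ((Fin d → Bool) → X)}
    (hh : h ∈ genSet T k) : h ∈ cubeGroup T := by
  obtain ⟨g, hg, n, _, rfl⟩ := hh
  rw [genSet_decomp]
  refine Subgroup.mul_mem _ ?_ ?_
  · apply Subgroup.subset_closure
    right
    exact ⟨g, hg, rfl⟩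
  · refine Subgroup.list_prod_mem _ (fun x hx => ?_)
    obtain ⟨i, _, rfl⟩ := List.mem_map.mp hx
    refine Subgroup.zpow_mem _ (Subgroup.subset_closure ?_) _
    left
    exact ⟨i, rfl⟩

lemma cubeGroup_subset_genSet (hcomm : ∀ i j : Fin d, ∀ x : X, T i (T j x) = T j (T i x))
    {h : ((Fin d → Bool) → X) ≃ₜ ((Fin d → Bool) → X)}
    (hh : h ∈ cubeGroup T) : h ∈ genSet T d := by
  refine Subgroup.closure_induction ?_ (genSet_one T d) ?_ ?_ hh
  · rintro x (⟨i, rfl⟩ | ⟨g, hg, rfl⟩)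
    · refine ⟨1, Subgroup.one_mem _, fun j => if j = i then 1 else 0,
        fun j hj => absurd hj (Nat.not_le.mpr j.is_lt), ?_⟩
      have h1 : (fun ε : Fin d → Bool => 1 * cubeMap T (fun j => if j = i then (1:ℤ) else 0) ε)
          = fun ε => T i ^ (if ε i then (1:ℤ) else 0) := by
        funext ε; rw [one_mul, cubeMap_single]
      rw [h1, ← faceHomeo_zpow, zpow_one]
    · refine ⟨g, hg, 0, fun _ _ => rfl, ?_⟩
      have h3 : diagHomeo d g = bigHomeoM (fun _ => g) := rfl
      rw [h3]
      congr 1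
      funext ε
      rw [cubeMap_zero, mul_one]
  · intro a b _ _ ha hb; exact genSet_mul T hcomm ha hb
  · intro a _ ha; exact genSet_inv T hcomm ha

lemma cubeGroup_eq_genSet (hcomm : ∀ i j : Fin d, ∀ x : X, T i (T j x) = T j (T i x)) :
    (cubeGroup T : Set _) = genSet T d :=
  Set.eq_of_subset_of_subset (fun _ hh => cubeGroup_subset_genSet T hcomm hh)
    (fun _ hh => genSet_subset_cubeGroup T hh)
end CubeGroupEq
section GoodPoint
open Metric
variable {Z : Type*} [MetricSpace Z] [CompactSpace Z]

/-- the full (two-sided) `t`-orbit of a point -/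
def orbZ (t : Z ≃ₜ Z) (z : Z) : Set Z := Set.range (fun c : ℤ => (t ^ c) z)

lemma orbZ_nonempty (t : Z ≃ₜ Z) (z : Z) : (orbZ t z).Nonempty := ⟨(t ^ (0:ℤ)) z, 0, rfl⟩

noncomputable def hfun (t : Z ≃ₜ Z) (q z : Z) : ℝ := infDist q (orbZ t z)

def Aset (t : Z ≃ₜ Z) (Y : Set Z) (q : Z) (k : ℕ) : Set Z :=
  ⋃₀ {V | IsOpen V ∧ ∃ c : ℤ, ∀ z ∈ V ∩ Y, dist q ((t ^ c) z) ≤ hfun t q z + 1/(k+1)}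

lemma Aset_open (t : Z ≃ₜ Z) (Y : Set Z) (q : Z) (k : ℕ) : IsOpen (Aset t Y q k) :=
  isOpen_sUnion (fun _ hV => hV.1)

lemma hfun_le (t : Z ≃ₜ Z) (q z : Z) (c : ℤ) : hfun t q z ≤ dist q ((t ^ c) z) :=
  infDist_le_dist_of_mem ⟨c, rfl⟩

lemma Aset_dense (t : Z ≃ₜ Z) (Y : Set Z) (hYc : IsClosed Y) (q : Z) (k : ℕ)
    (W : Set Z) (hW : IsOpen W) (hWne : (W ∩ Y).Nonempty) :
    (Aset t Y q k ∩ (W ∩ Y)).Nonempty := by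
  have hpos : (0:ℝ) < 1/(k+1) := by positivity
  set YW : Set Z := Y ∩ closure (W ∩ Y) with hYWdef
  have hYWc : IsClosed YW := hYc.inter isClosed_closure
  have hYWne : YW.Nonempty := hWne.imp (fun z hz => ⟨hz.2, subset_closure hz⟩)
  haveI : CompleteSpace YW := hYWc.completeSpace_coe
  haveI : Nonempty YW := hYWne.to_subtype
  set F : ℤ → Set YW := fun c => {z | dist q ((t ^ c) z.val) ≤ hfun t q z.val + 1/(k+1)}
    with hFdef
  have hFc : ∀ c, IsClosed (F c) := by
    intro c
    have hEq : F c = ⋂ c' : ℤ,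
        {z : YW | dist q ((t ^ c) z.val) ≤ dist q ((t ^ c') z.val) + 1/(k+1)} := by
      ext z
      simp only [hFdef, Set.mem_setOf_eq, Set.mem_iInter]
      constructor
      · intro hz c'
        exact hz.trans (by linarith [hfun_le t q z.val c'])
      · intro hz
        have : dist q ((t ^ c) z.val) - 1/(k+1) ≤ hfun t q z.val := by
          refine le_of_not_gt (fun hlt => ?_)
          obtain ⟨y, ⟨c', rfl⟩, hy⟩ := (infDist_lt_iff (orbZ_nonempty t z.val)).mp hlt
          linarith [hz c']
        linarith
    rw [hEq]
    refine isClosed_iInter (fun c' => isClosed_le ?_ ?_)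
    · exact continuous_const.dist ((t ^ c).continuous.comp continuous_subtype_val)
    · exact (continuous_const.dist
        ((t ^ c').continuous.comp continuous_subtype_val)).add continuous_const
  have hFU : ⋃ c, F c = Set.univ := by
    refine Set.eq_univ_of_forall (fun z => ?_)
    have : infDist q (orbZ t z.val) < hfun t q z.val + 1/(k+1) := by
      simp only [hfun]; linarith
    obtain ⟨y, ⟨c, rfl⟩, hy⟩ := (infDist_lt_iff (orbZ_nonempty t z.val)).mp this
    exact Set.mem_iUnion.mpr ⟨c, le_of_lt hy⟩
  obtain ⟨c₀, z₀, hz₀⟩ := nonempty_interior_of_iUnion_of_closed hFc hFU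
  obtain ⟨U, hUsub, hUo, hz₀U⟩ := mem_interior.mp hz₀
  obtain ⟨V, hVo, hVU⟩ := isOpen_induced_iff.mp hUo
  have hz₀V : (z₀ : Z) ∈ V := by rw [← hVU] at hz₀U; exact hz₀U
  have hz₀cl : (z₀ : Z) ∈ closure (W ∩ Y) := z₀.2.2
  obtain ⟨z₁, hz₁V, hz₁WY⟩ := _root_.mem_closure_iff.mp hz₀cl V hVo hz₀V
  refine ⟨z₁, ?_, hz₁WY⟩
  refine ⟨V ∩ W, ⟨hVo.inter hW, c₀, fun z hz => ?_⟩, hz₁V, hz₁WY.1⟩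
  have hzYW : z ∈ YW := ⟨hz.2, subset_closure ⟨hz.1.2, hz.2⟩⟩
  have : (⟨z, hzYW⟩ : YW) ∈ U := by rw [← hVU]; exact hz.1.1
  exact hUsub this

lemma goodPoint (t : Z ≃ₜ Z) (Y : Set Z) (hYc : IsClosed Y) (hYne : Y.Nonempty) :
    ∃ w₀ ∈ Y, ∀ v : Z,
      (w₀, v) ∈ closure {p : Z × Z | ∃ z ∈ Y, ∃ c : ℤ, p = (z, (t ^ c) z)} →
      v ∈ closure (orbZ t w₀) := by
  haveI : Nonempty Z := ⟨hYne.some⟩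
  obtain ⟨D, hDc, hDd⟩ := TopologicalSpace.exists_countable_dense Z
  have hDne : D.Nonempty := hDd.nonempty
  obtain ⟨e, he⟩ := hDc.exists_eq_range hDne
  haveI : CompleteSpace (Y : Set Z) := hYc.completeSpace_coe
  haveI : Nonempty (Y : Set Z) := hYne.to_subtype
  set B : ℕ × ℕ → Set Y := fun mk => Subtype.val ⁻¹' (Aset t Y (e mk.1) mk.2) with hBdef
  have hBo : ∀ mk, IsOpen (B mk) := fun mk =>
    (Aset_open t Y (e mk.1) mk.2).preimage continuous_subtype_val
  have hBd : ∀ mk, Dense (B mk) := by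
    intro mk
    rw [dense_iff_inter_open]
    rintro U hU hUne
    obtain ⟨V, hVo, hVU⟩ := isOpen_induced_iff.mp hU
    have hVYne : (V ∩ Y).Nonempty := by
      obtain ⟨u, hu⟩ := hUne
      exact ⟨u.val, by rw [← hVU] at hu; exact hu, u.2⟩
    obtain ⟨w, hwA, hwV, hwY⟩ := Aset_dense t Y hYc (e mk.1) mk.2 V hVo hVYne
    exact ⟨⟨w, hwY⟩, by rw [← hVU]; exact hwV, hwA⟩
  have hdense := dense_iInter_of_isOpen hBo hBd
  obtain ⟨w', hw'⟩ := hdense.nonempty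
  refine ⟨w'.val, w'.2, ?_⟩
  intro v hv
  by_contra hvn
  rw [Metric.mem_closure_iff] at hvn
  push_neg at hvn
  obtain ⟨ε₀, hε₀, hfar⟩ := hvn
  obtain ⟨q, hqD, hqv⟩ := Metric.mem_closure_iff.mp (hDd v) (ε₀/8) (by positivity)
  have hqrange : q ∈ Set.range e := by rw [← he]; exact hqD
  obtain ⟨m, rfl⟩ := hqrange
  obtain ⟨k, hk⟩ := exists_nat_one_div_lt (show (0:ℝ) < ε₀/8 by positivity)
  have hA : w'.val ∈ Aset t Y (e m) k := Set.mem_iInter.mp hw' (m, k)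
  obtain ⟨V, ⟨hVo, cs, hV⟩, hw₀V⟩ := hA
  obtain ⟨δ₁, hδ₁, hcont⟩ := Metric.continuous_iff.mp (t ^ cs).continuous w'.val (ε₀/8)
    (by positivity)
  obtain ⟨δ₂, hδ₂, hball⟩ := Metric.isOpen_iff.mp hVo w'.val hw₀V
  have hε' : (0:ℝ) < min (min δ₁ δ₂) (ε₀/8) := by positivity
  obtain ⟨p, hp, hpd⟩ := Metric.mem_closure_iff.mp hv _ hε'
  obtain ⟨z, hzY, c, rfl⟩ := hp
  rw [Prod.dist_eq] at hpd
  have hd1 : dist w'.val z < min (min δ₁ δ₂) (ε₀/8) := (le_max_left _ _).trans_lt hpd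
  have hd2 : dist v ((t ^ c) z) < min (min δ₁ δ₂) (ε₀/8) := (le_max_right _ _).trans_lt hpd
  have hzV : z ∈ V := hball (by
    rw [Metric.mem_ball, dist_comm]
    exact hd1.trans_le ((min_le_left _ _).trans (min_le_right _ _)))
  have hfz : hfun t (e m) z < ε₀/8 + ε₀/8 + ε₀/8 := by
    have h1 : hfun t (e m) z ≤ dist (e m) ((t ^ c) z) := hfun_le t (e m) z c
    have h2 : dist (e m) ((t ^ c) z) ≤ dist (e m) v + dist v ((t ^ c) z) := dist_triangle _ _ _
    have h3 : dist (e m) v < ε₀/8 := by rw [dist_comm]; exact hqv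
    have h4 : dist v ((t ^ c) z) < ε₀/8 := hd2.trans_le (min_le_right _ _)
    linarith
  have hVz := hV z ⟨hzV, hzY⟩
  have h5 : dist ((t ^ cs) z) ((t ^ cs) w'.val) < ε₀/8 := by
    refine hcont z ?_
    rw [dist_comm]
    exact hd1.trans_le ((min_le_left _ _).trans (min_le_left _ _))
  have h6 : dist v ((t ^ cs) w'.val) ≤
      dist v (e m) + dist (e m) ((t ^ cs) z) + dist ((t ^ cs) z) ((t ^ cs) w'.val) :=
    dist_triangle4 _ _ _ _
  have h7 : ε₀ ≤ dist v ((t ^ cs) w'.val) := hfar _ ⟨cs, rfl⟩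
  have h8 : (1:ℝ)/(k+1) < ε₀/8 := hk
  linarith
end GoodPoint
section PropP
open Metric
variable {Z : Type*} [MetricSpace Z] [CompactSpace Z]

/-- The key dynamical proposition: for a minimal action of a commutative-enough family `S`
on `Y` and `t ∈ S`, the "pair-cube" system `cl {(z, t^c z)}` is minimal under the group
generated by the diagonal action of `S` and `id × t`. -/
lemma propP (S : Set (Z ≃ₜ Z)) (hone : (1 : Z ≃ₜ Z) ∈ S)
    (hmulS : ∀ a ∈ S, ∀ b ∈ S, a * b ∈ S) (hinvS : ∀ a ∈ S, a⁻¹ ∈ S)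
    (t : Z ≃ₜ Z) (htS : t ∈ S) (hcommS : ∀ a ∈ S, Commute t a)
    (Y : Set Z) (hYc : IsClosed Y) (hYne : Y.Nonempty)
    (hYinv : ∀ a ∈ S, ∀ z ∈ Y, a z ∈ Y)
    (hminY : ∀ v ∈ Y, Y ⊆ closure {w | ∃ a ∈ S, a v = w})
    (v : Z × Z)
    (hv : v ∈ closure {p : Z × Z | ∃ z ∈ Y, ∃ c : ℤ, p = (z, (t ^ c) z)}) :
    closure {p : Z × Z | ∃ z ∈ Y, ∃ c : ℤ, p = (z, (t ^ c) z)} ⊆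
      closure {p : Z × Z | ∃ a ∈ S, ∃ c : ℤ, p = (a v.1, (a * t ^ c) v.2)} := by
  set pairGen : Set (Z × Z) := {p : Z × Z | ∃ z ∈ Y, ∃ c : ℤ, p = (z, (t ^ c) z)}
    with hpairGen
  set Yhat := closure pairGen with hYhat
  set orbSet : Set (Z × Z) := {p : Z × Z | ∃ a ∈ S, ∃ c : ℤ, p = (a v.1, (a * t ^ c) v.2)}
    with horbSet
  set M := closure orbSet with hM
  -- powers of t belong to S
  have hzpowS : ∀ c : ℤ, t ^ c ∈ S := by
    have hn : ∀ n : ℕ, t ^ (n : ℕ) ∈ S := by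
      intro n
      induction n with
      | zero => simpa using hone
      | succ n ih => rw [pow_succ]; exact hmulS _ ih _ htS
    intro c
    rcases c with n | n
    · simpa using hn n
    · rw [zpow_negSucc]; exact hinvS _ (hn (n+1))
  have hcomm_zpow : ∀ c : ℤ, ∀ a ∈ S, Commute (t ^ c) a :=
    fun c a ha => (hcommS a ha).zpow_left c
  have hYzpow : ∀ c : ℤ, ∀ z ∈ Y, (t ^ c) z ∈ Y := fun c => hYinv _ (hzpowS c)
  -- the key commutation identity
  have key : ∀ a ∈ S, ∀ (c m : ℤ) (z : Z), (a * t ^ c) ((t ^ m) z) = (t ^ (c + m)) (a z) := by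
    intro a ha c m z
    have h1 : (a * t ^ c) ((t ^ m) z) = (a * (t ^ c * t ^ m)) z := by
      rw [← mul_assoc]; rfl
    rw [h1, ← zpow_add, ← (hcomm_zpow (c + m) a ha).eq]
    rfl
  -- invariance of Yhat
  have hYhat_inv : ∀ a ∈ S, ∀ c : ℤ, ∀ p ∈ Yhat, (a p.1, (a * t ^ c) p.2) ∈ Yhat := by
    intro a ha c p hp
    have hcont : Continuous (fun p : Z × Z => (a p.1, (a * t ^ c) p.2)) :=
      ((a.continuous.comp continuous_fst).prodMk
        ((a * t ^ c).continuous.comp continuous_snd))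
    have himg : (fun p : Z × Z => (a p.1, (a * t ^ c) p.2)) '' pairGen ⊆ pairGen := by
      rintro _ ⟨_, ⟨z, hz, m, rfl⟩, rfl⟩
      refine ⟨a z, hYinv a ha z hz, c + m, ?_⟩
      show (a z, (a * t ^ c) ((t ^ m) z)) = (a z, (t ^ (c + m)) (a z))
      rw [key a ha c m z]
    have h2 : (a p.1, (a * t ^ c) p.2) ∈ (fun p : Z × Z => (a p.1, (a * t ^ c) p.2)) '' Yhat :=
      Set.mem_image_of_mem _ hp
    rw [hYhat] at h2
    exact closure_mono himg (image_closure_subset_closure_image hcont h2)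
  -- invariance of M
  have hM_inv : ∀ b ∈ S, ∀ e : ℤ, ∀ p ∈ M, (b p.1, (b * t ^ e) p.2) ∈ M := by
    intro b hb e p hp
    have hcont : Continuous (fun p : Z × Z => (b p.1, (b * t ^ e) p.2)) :=
      ((b.continuous.comp continuous_fst).prodMk
        ((b * t ^ e).continuous.comp continuous_snd))
    have himg : (fun p : Z × Z => (b p.1, (b * t ^ e) p.2)) '' orbSet ⊆ orbSet := by
      rintro _ ⟨_, ⟨a, ha, c, rfl⟩, rfl⟩
      refine ⟨b * a, hmulS b hb a ha, e + c, ?_⟩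
      show (b ((a v.1)), (b * t ^ e) ((a * t ^ c) v.2)) = ((b * a) v.1, ((b * a) * t ^ (e + c)) v.2)
      have h9 : (b * t ^ e) * (a * t ^ c) = (b * a) * t ^ (e + c) := by
        have h10 : t ^ e * (a * t ^ c) = a * t ^ (e + c) := by
          rw [← mul_assoc, (hcomm_zpow e a ha).eq, mul_assoc, ← zpow_add]
        rw [mul_assoc, h10, ← mul_assoc]
      have h11 : (b * t ^ e) ((a * t ^ c) v.2) = ((b * t ^ e) * (a * t ^ c)) v.2 := rfl
      rw [h11, h9]
      rfl
    have h2 : (b p.1, (b * t ^ e) p.2) ∈ (fun p : Z × Z => (b p.1, (b * t ^ e) p.2)) '' M :=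
      Set.mem_image_of_mem _ hp
    rw [hM] at h2
    exact closure_mono himg (image_closure_subset_closure_image hcont h2)
  -- M ⊆ Yhat
  have hMYhat : M ⊆ Yhat := by
    refine closure_minimal ?_ isClosed_closure
    rintro _ ⟨a, ha, c, rfl⟩
    exact hYhat_inv a ha c v hv
  -- Yhat ⊆ Y × Y
  have hYhatYY : Yhat ⊆ Y ×ˢ Y := by
    refine closure_minimal ?_ (hYc.prod hYc)
    rintro _ ⟨z, hz, c, rfl⟩
    exact ⟨hz, hYzpow c z hz⟩
  have hv1Y : v.1 ∈ Y := (hYhatYY hv).1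
  -- good point
  obtain ⟨w₀, hw₀Y, hgood⟩ := goodPoint t Y hYc hYne
  -- w₀ is in the closure of the first-coordinate  orbit of v.1
  have hw₀cl : w₀ ∈ closure {w | ∃ a ∈ S, a v.1 = w} := hminY v.1 hv1Y hw₀Y
  have hfstM : IsClosed (Prod.fst '' M) :=
    (isClosed_closure.isCompact.image continuous_fst).isClosed
  have horb1 : {w | ∃ a ∈ S, a v.1 = w} ⊆ Prod.fst '' M := by
    rintro _ ⟨a, ha, rfl⟩
    refine ⟨(a v.1, (a * t ^ (0:ℤ)) v.2), subset_closure ⟨a, ha, 0, rfl⟩, rfl⟩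
  have hw₀M : w₀ ∈ Prod.fst '' M := by
    have := closure_minimal horb1 hfstM
    exact this hw₀cl
  obtain ⟨p₀, hp₀M, hp₀1⟩ := hw₀M
  obtain ⟨w₂⟩ : ∃ w₂, (w₀, w₂) ∈ M := ⟨p₀.2, by rwa [← hp₀1, Prod.mk.eta]⟩
  rename_i hw₂M
  -- w₂ is in the closure orbit of t over w₀
  have hw₂orb : w₂ ∈ closure (orbZ t w₀) := hgood w₂ (hMYhat hw₂M)
  -- points (t^c w₀, w₂) are in M
  have hcw : ∀ c : ℤ, ((t ^ c) w₀, w₂) ∈ M := by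
    intro c
    have := hM_inv (t ^ c) (hzpowS c) (-c) (w₀, w₂) hw₂M
    have h12 : (t ^ c * t ^ (-c)) w₂ = w₂ := by
      rw [← zpow_add, add_neg_cancel]
      rfl
    simpa [h12] using this
  -- (w₂, w₂) ∈ M
  have hw₂w₂ : (w₂, w₂) ∈ M := by
    have : (w₂, w₂) ∈ closure M := by
      rw [Metric.mem_closure_iff]
      intro ε hε
      obtain ⟨b, ⟨c, rfl⟩, hb⟩ := Metric.mem_closure_iff.mp hw₂orb ε hε
      refine ⟨((t ^ c) w₀, w₂), hcw c, ?_⟩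
      rw [Prod.dist_eq]
      simp only [dist_self]
      exact max_lt hb hε
    rwa [closure_closure] at this
  have hw₂Y : w₂ ∈ Y := (hYhatYY (hMYhat hw₂M)).2
  -- final step : every pair generator is in M
  refine closure_minimal ?_ isClosed_closure
  rintro _ ⟨z, hz, m, rfl⟩
  suffices h : (z, (t ^ m) z) ∈ closure M by rwa [hM, closure_closure] at h
  rw [Metric.mem_closure_iff]
  intro ε hε
  obtain ⟨δ, hδ, hc⟩ := Metric.continuous_iff.mp (t ^ m).continuous z ε hε
  have hminε : (0:ℝ) < min δ ε := lt_min hδ hε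
  obtain ⟨u, ⟨a, ha, rfl⟩, hu⟩ := Metric.mem_closure_iff.mp (hminY w₂ hw₂Y hz) _ hminε
  refine ⟨(a w₂, (a * t ^ m) w₂), hM_inv a ha m (w₂, w₂) hw₂w₂, ?_⟩
  rw [Prod.dist_eq]
  refine max_lt (hu.trans_le (min_le_right _ _)) ?_
  have h13 : (a * t ^ m) w₂ = (t ^ m) (a w₂) := by
    rw [← (hcomm_zpow m a ha).eq]
    rfl
  rw [h13, dist_comm]
  refine hc (a w₂) ?_
  rw [dist_comm]
  exact hu.trans_le (min_le_left _ _)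
end PropP
section Induction
variable {X : Type*} [MetricSpace X] [CompactSpace X]
variable (T : Fin d → X ≃ₜ X)

/-- the diagonal homeomorphism of a single generator -/
def diagT (K : Fin d) : ((Fin d → Bool) → X) ≃ₜ ((Fin d → Bool) → X) :=
  bigHomeoM (fun _ => T K)

lemma diagT_zpow_apply (K : Fin d) (c : ℤ) (z : (Fin d → Bool) → X) (ε : Fin d → Bool) :
    ((diagT T K) ^ c) z ε = (T K ^ c) (z ε) := by
  have h1 : (diagT T K) ^ c = bigHomeoM ((fun _ : Fin d → Bool => T K) ^ c) :=
    (map_zpow bigHomeoM _ c).symm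
  rw [h1]
  rfl

lemma diagT_mem_genSet (K : Fin d) (k : ℕ) : diagT T K ∈ genSet T k := by
  refine ⟨T K, T_mem_genGroup T K, 0, fun _ _ => rfl, ?_⟩
  unfold diagT
  congr 1
  funext ε
  rw [cubeMap_zero, mul_one]

lemma diagT_commute (hcomm : ∀ i j : Fin d, ∀ x : X, T i (T j x) = T j (T i x))
    (K : Fin d) {h : ((Fin d → Bool) → X) ≃ₜ ((Fin d → Bool) → X)} {k : ℕ}
    (hh : h ∈ genSet T k) : Commute (diagT T K) h := by
  obtain ⟨g, hg, n, _, rfl⟩ := hh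
  unfold diagT
  refine Commute.map ?_ bigHomeoM
  show _ = _
  funext ε
  show (T K) * (g * cubeMap T n ε) = (g * cubeMap T n ε) * (T K)
  exact (genGroup_commute T hcomm (T_mem_genGroup T K)
    (Subgroup.mul_mem _ hg (cubeMap_mem_genGroup T n ε))).eq

/-- membership of images of generators -/
lemma Qset_invariant (hcomm : ∀ i j : Fin d, ∀ x : X, T i (T j x) = T j (T i x)) {k : ℕ}
    {h : ((Fin d → Bool) → X) ≃ₜ ((Fin d → Bool) → X)} (hh : h ∈ genSet T k)
    {y : (Fin d → Bool) → X} (hy : y ∈ Qset T k) : h y ∈ Qset T k := by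
  obtain ⟨g, hg, n, hn, rfl⟩ := hh
  have himg : (bigHomeoM fun ε => g * cubeMap T n ε) '' QsetGen T k ⊆ QsetGen T k := by
    rintro _ ⟨w, ⟨x, m, hm, hw⟩, rfl⟩
    refine ⟨g x, n + m, fun i hi => by simp [hn i hi, hm i hi], fun ε => ?_⟩
    rw [bigHomeoM_apply, hw ε]
    show (g * cubeMap T n ε) (cubeMap T m ε x) = cubeMap T (n + m) ε (g x)
    have h1 : (g * cubeMap T n ε) (cubeMap T m ε x) = ((g * cubeMap T n ε) * cubeMap T m ε) x :=
      rfl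
    have h2 : (g * cubeMap T n ε) * cubeMap T m ε = cubeMap T (n + m) ε * g := by
      rw [mul_assoc, ← cubeMap_add T hcomm,
        (commute_g_cubeMap T hcomm hg (n + m) ε).eq]
    rw [h1, h2]
    rfl
  have := image_closure_subset_closure_image
    (f := ((bigHomeoM fun ε => g * cubeMap T n ε) : _ → _)) (s := QsetGen T k)
    (Homeomorph.continuous _)
  exact closure_mono himg (this (Set.mem_image_of_mem _ hy))
end Induction
section Psi
variable {X : Type*} [MetricSpace X] [CompactSpace X]
variable (T : Fin d → X ≃ₜ X)

def rmap (K : Fin d) (b : Bool) (y : (Fin d → Bool) → X) : (Fin d → Bool) → X :=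
  fun ε => y (Function.update ε K b)

def psiMap (K : Fin d) (y : (Fin d → Bool) → X) :
    ((Fin d → Bool) → X) × ((Fin d → Bool) → X) := (rmap K false y, rmap K true y)

lemma rmap_continuous (K : Fin d) (b : Bool) : Continuous (rmap (X := X) K b) :=
  continuous_pi (fun _ => continuous_apply _)

lemma psiMap_continuous (K : Fin d) : Continuous (psiMap (X := X) K) :=
  (rmap_continuous K false).prodMk (rmap_continuous K true)

lemma psiMap_injective (K : Fin d) : Function.Injective (psiMap (X := X) K) := by
  intro y y' h
  have h0 : rmap K false y = rmap K false y' := congrArg Prod.fst h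
  have h1 : rmap K true y = rmap K true y' := congrArg Prod.snd h
  funext ε
  rcases hb : ε K with _ | _
  · have := congrFun h0 ε
    simp only [rmap] at this
    rwa [← hb, Function.update_eq_self] at this
  · have := congrFun h1 ε
    simp only [rmap] at this
    rwa [← hb, Function.update_eq_self] at this

lemma rmap_gen (hcomm : ∀ i j : Fin d, ∀ x : X, T i (T j x) = T j (T i x))
    (K : Fin d) (g : X ≃ₜ X) (n : Fin d → ℤ) (y : (Fin d → Bool) → X) (b : Bool) :
    rmap K b (bigHomeoM (fun ε => g * cubeMap T n ε) y) =
      bigHomeoM (fun ε => g * (T K ^ (if b then n K else 0) *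
        cubeMap T (Function.update n K 0) ε)) (rmap K b y) := by
  funext ε
  show (g * cubeMap T n (Function.update ε K b)) (y (Function.update ε K b)) = _
  rw [cubeMap_update_eps T hcomm n K ε b]
  rfl

lemma rmap_gen_false (hcomm : ∀ i j : Fin d, ∀ x : X, T i (T j x) = T j (T i x))
    (K : Fin d) (g : X ≃ₜ X) (n : Fin d → ℤ) (y : (Fin d → Bool) → X) :
    rmap K false (bigHomeoM (fun ε => g * cubeMap T n ε) y) =
      bigHomeoM (fun ε => g * cubeMap T (Function.update n K 0) ε) (rmap K false y) := by
  rw [rmap_gen T hcomm K g n y false]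
  have h2 : (fun ε => g * (T K ^ (if false then n K else 0) *
      cubeMap T (Function.update n K 0) ε))
      = fun ε => g * cubeMap T (Function.update n K 0) ε := by
    funext ε
    simp
  rw [h2]

lemma rmap_gen_true (hcomm : ∀ i j : Fin d, ∀ x : X, T i (T j x) = T j (T i x))
    (K : Fin d) (g : X ≃ₜ X) (n : Fin d → ℤ) (y : (Fin d → Bool) → X) :
    rmap K true (bigHomeoM (fun ε => g * cubeMap T n ε) y) =
      ((bigHomeoM (fun ε => g * cubeMap T (Function.update n K 0) ε)) *
        (diagT T K) ^ (n K)) (rmap K true y) := by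
  rw [rmap_gen T hcomm K g n y true]
  have h1 : (bigHomeoM (fun ε => g * cubeMap T (Function.update n K 0) ε)) *
      (diagT T K) ^ (n K) =
      bigHomeoM ((fun ε => g * cubeMap T (Function.update n K 0) ε) *
        ((fun _ : Fin d → Bool => T K) ^ (n K))) := by
    rw [map_mul, map_zpow]
    rfl
  rw [h1]
  have h2 : ((fun ε => g * cubeMap T (Function.update n K 0) ε) *
      ((fun _ : Fin d → Bool => T K) ^ (n K)))
      = fun ε => g * (T K ^ (if true then n K else 0) *
        cubeMap T (Function.update n K 0) ε) := by
    funext ε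
    show (g * cubeMap T (Function.update n K 0) ε) * (T K ^ (n K)) = _
    have hc : Commute (T K ^ (n K)) (cubeMap T (Function.update n K 0) ε) :=
      ((genGroup_commute T hcomm (T_mem_genGroup T K)
        (cubeMap_mem_genGroup T _ ε)).zpow_left (n K))
    rw [if_pos rfl, hc.eq, mul_assoc]
  rw [h2]
end Psi
section Step
variable {X : Type*} [MetricSpace X] [CompactSpace X]
variable (T : Fin d → X ≃ₜ X)

def pairGenK (K : Fin d) (k : ℕ) : Set (((Fin d → Bool) → X) × ((Fin d → Bool) → X)) :=
  {p | ∃ z ∈ Qset T k, ∃ c : ℤ, p = (z, ((diagT T K) ^ c) z)}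

lemma update_supp {k : ℕ} (hk : k < d) (n : Fin d → ℤ)
    (hn : ∀ i : Fin d, k + 1 ≤ (i : ℕ) → n i = 0) :
    ∀ i : Fin d, k ≤ (i : ℕ) → Function.update n ⟨k, hk⟩ 0 i = 0 := by
  intro i hi
  rcases eq_or_ne i ⟨k, hk⟩ with rfl | hiK
  · simp
  · rw [Function.update_of_ne hiK]
    refine hn i ?_
    have : (i : ℕ) ≠ k := fun h => hiK (Fin.ext h)
    omega

lemma update_supp' {k : ℕ} (hk : k < d) (m : Fin d → ℤ) (c : ℤ)
    (hm : ∀ i : Fin d, k ≤ (i : ℕ) → m i = 0) :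
    ∀ i : Fin d, k + 1 ≤ (i : ℕ) → Function.update m ⟨k, hk⟩ c i = 0 := by
  intro i hi
  have hiK : i ≠ ⟨k, hk⟩ := by
    intro h
    rw [h] at hi
    simp only [Fin.val_mk] at hi
    omega
  rw [Function.update_of_ne hiK]
  exact hm i (by omega)

lemma psi_gen_mem (hcomm : ∀ i j : Fin d, ∀ x : X, T i (T j x) = T j (T i x))
    {k : ℕ} (hk : k < d) {y : (Fin d → Bool) → X} (hy : y ∈ QsetGen T (k+1)) :
    ∃ z ∈ QsetGen T k, ∃ c : ℤ,
      psiMap ⟨k, hk⟩ y = (z, ((diagT T ⟨k, hk⟩) ^ c) z) := by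
  obtain ⟨x, n, hn, hyε⟩ := hy
  set K : Fin d := ⟨k, hk⟩
  set n' := Function.update n K 0 with hn'
  set z : (Fin d → Bool) → X := fun ε => cubeMap T n' ε x with hz
  have hzgen : z ∈ QsetGen T k := ⟨x, n', update_supp hk n hn, fun _ => rfl⟩
  refine ⟨z, hzgen, n K, ?_⟩
  have h0 : rmap K false y = z := by
    funext ε
    show y (Function.update ε K false) = z ε
    rw [hyε, cubeMap_update_eps T hcomm n K ε false]
    simp [hz, hn']
  have h1 : rmap K true y = ((diagT T K) ^ (n K)) z := by
    funext ε
    show y (Function.update ε K true) = _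
    rw [hyε, cubeMap_update_eps T hcomm n K ε true, diagT_zpow_apply]
    simp only [if_pos rfl]
    rfl
  show (rmap K false y, rmap K true y) = _
  rw [h0, h1]

lemma pair_gen_mem (hcomm : ∀ i j : Fin d, ∀ x : X, T i (T j x) = T j (T i x))
    {k : ℕ} (hk : k < d) {z : (Fin d → Bool) → X} (hz : z ∈ QsetGen T k) (c : ℤ) :
    ∃ y ∈ QsetGen T (k+1), psiMap ⟨k, hk⟩ y = (z, ((diagT T ⟨k, hk⟩) ^ c) z) := by
  obtain ⟨x, m, hm, hzε⟩ := hz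
  set K : Fin d := ⟨k, hk⟩
  set y : (Fin d → Bool) → X := fun ε => cubeMap T (Function.update m K c) ε x with hy
  have hmK : m K = 0 := hm K (le_refl k)
  have huus : Function.update (Function.update m K c) K 0 = m := by
    rw [Function.update_idem]
    nth_rewrite 2 [← Function.update_eq_self K m]
    rw [hmK]
  refine ⟨y, ⟨x, _, update_supp' hk m c hm, fun _ => rfl⟩, ?_⟩
  have h0 : rmap K false y = z := by
    funext ε
    show y (Function.update ε K false) = z ε
    rw [hy]
    simp only
    rw [cubeMap_update_eps T hcomm _ K ε false, huus, hzε]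
    simp
  have h1 : rmap K true y = ((diagT T K) ^ c) z := by
    funext ε
    show y (Function.update ε K true) = _
    rw [hy]
    simp only
    rw [cubeMap_update_eps T hcomm _ K ε true, huus, diagT_zpow_apply, hzε]
    simp only [if_pos rfl, Function.update_self]
    rfl
  show (rmap K false y, rmap K true y) = _
  rw [h0, h1]

lemma psi_Qset_eq (hcomm : ∀ i j : Fin d, ∀ x : X, T i (T j x) = T j (T i x))
    {k : ℕ} (hk : k < d) :
    psiMap ⟨k, hk⟩ '' Qset T (k+1) = closure (pairGenK T ⟨k, hk⟩ k) := by
  set K : Fin d := ⟨k, hk⟩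
  have hQc : IsCompact (Qset T (k+1)) := isClosed_closure.isCompact
  have himgc : IsClosed (psiMap K '' Qset T (k+1)) :=
    (hQc.image (psiMap_continuous K)).isClosed
  apply Set.eq_of_subset_of_subset
  · have h1 : psiMap K '' QsetGen T (k+1) ⊆ pairGenK T K k := by
      rintro _ ⟨y, hy, rfl⟩
      obtain ⟨z, hzgen, c, hψ⟩ := psi_gen_mem T hcomm hk hy
      exact ⟨z, subset_closure hzgen, c, hψ⟩
    calc psiMap K '' Qset T (k+1)
        ⊆ closure (psiMap K '' QsetGen T (k+1)) :=
          image_closure_subset_closure_image (psiMap_continuous K)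
      _ ⊆ closure (pairGenK T K k) := closure_mono h1
  · refine closure_minimal ?_ himgc
    rintro _ ⟨z, hz, c, rfl⟩
    have hφc : Continuous (fun w : (Fin d → Bool) → X => (w, ((diagT T K) ^ c) w)) :=
      continuous_id.prodMk ((diagT T K ^ c).continuous)
    have h2 : (fun w : (Fin d → Bool) → X => (w, ((diagT T K) ^ c) w)) '' QsetGen T k ⊆
        psiMap K '' Qset T (k+1) := by
      rintro _ ⟨w, hw, rfl⟩
      obtain ⟨y, hygen, hψ⟩ := pair_gen_mem T hcomm hk hw c
      exact ⟨y, subset_closure hygen, hψ⟩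
    have h3 : (z, ((diagT T K) ^ c) z) ∈
        (fun w : (Fin d → Bool) → X => (w, ((diagT T K) ^ c) w)) '' Qset T k :=
      Set.mem_image_of_mem _ hz
    have h4 := image_closure_subset_closure_image (s := QsetGen T k) hφc h3
    exact closure_minimal h2 himgc h4

lemma psi_orbit_eq (hcomm : ∀ i j : Fin d, ∀ x : X, T i (T j x) = T j (T i x))
    {k : ℕ} (hk : k < d) (y : (Fin d → Bool) → X) :
    psiMap ⟨k, hk⟩ '' {w | ∃ h ∈ genSet T (k+1), h y = w}
      = {p | ∃ a ∈ genSet T k, ∃ c : ℤ,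
          p = (a (psiMap ⟨k, hk⟩ y).1, (a * (diagT T ⟨k, hk⟩) ^ c) (psiMap ⟨k, hk⟩ y).2)} := by
  set K : Fin d := ⟨k, hk⟩
  apply Set.eq_of_subset_of_subset
  · rintro _ ⟨_, ⟨h, ⟨g, hg, n, hn, rfl⟩, rfl⟩, rfl⟩
    refine ⟨bigHomeoM (fun ε => g * cubeMap T (Function.update n K 0) ε),
      ⟨g, hg, _, update_supp hk n hn, rfl⟩, n K, ?_⟩
    show (rmap K false _, rmap K true _) = _
    rw [rmap_gen_false T hcomm K g n y, rmap_gen_true T hcomm K g n y]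
    rfl
  · rintro _ ⟨_, ⟨g, hg, m, hm, rfl⟩, c, rfl⟩
    have hmK : m K = 0 := hm K (le_refl k)
    have huus : Function.update (Function.update m K c) K 0 = m := by
      rw [Function.update_idem]
      nth_rewrite 2 [← Function.update_eq_self K m]
      rw [hmK]
    refine ⟨bigHomeoM (fun ε => g * cubeMap T (Function.update m K c) ε) y,
      ⟨bigHomeoM (fun ε => g * cubeMap T (Function.update m K c) ε),
        ⟨g, hg, _, update_supp' hk m c hm, rfl⟩, rfl⟩, ?_⟩
    show (rmap K false _, rmap K true _) = _
    rw [rmap_gen_false T hcomm K g _ y, rmap_gen_true T hcomm K g _ y, huus,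
      Function.update_self]
    rfl
end Step
section Assemble
variable {X : Type*} [MetricSpace X] [CompactSpace X]
variable (T : Fin d → X ≃ₜ X)

lemma Pmin_succ (hcomm : ∀ i j : Fin d, ∀ x : X, T i (T j x) = T j (T i x))
    (hX : Nonempty X) {k : ℕ} (hk : k < d)
    (IH : ∀ y ∈ Qset T k, ∀ z ∈ Qset T k, z ∈ closure {w | ∃ h ∈ genSet T k, h y = w}) :
    ∀ y ∈ Qset T (k+1), ∀ z ∈ Qset T (k+1),
      z ∈ closure {w | ∃ h ∈ genSet T (k+1), h y = w} := by
  intro y hy z hz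
  set K : Fin d := ⟨k, hk⟩
  have hYne : (Qset T k).Nonempty := by
    refine ⟨fun _ => hX.some, subset_closure ⟨hX.some, 0, fun _ _ => rfl, fun ε => ?_⟩⟩
    rw [cubeMap_zero]
    rfl
  have hprop := propP (genSet T k) (genSet_one T k)
    (fun a ha b hb => genSet_mul T hcomm ha hb) (fun a ha => genSet_inv T hcomm ha)
    (diagT T K) (diagT_mem_genSet T K k) (fun a ha => diagT_commute T hcomm K ha)
    (Qset T k) isClosed_closure hYne
    (fun a ha z' hz' => Qset_invariant T hcomm ha hz')
    (fun v hv => IH v hv)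
  have hψy : psiMap K y ∈ closure (pairGenK T K k) := by
    rw [← psi_Qset_eq T hcomm hk]
    exact Set.mem_image_of_mem _ hy
  have hψz : psiMap K z ∈ closure (pairGenK T K k) := by
    rw [← psi_Qset_eq T hcomm hk]
    exact Set.mem_image_of_mem _ hz
  have h5 := hprop (psiMap K y) hψy hψz
  rw [← psi_orbit_eq T hcomm hk y] at h5
  have horb_cpt : IsClosed (psiMap K '' closure {w | ∃ h ∈ genSet T (k+1), h y = w}) :=
    (isClosed_closure.isCompact.image (psiMap_continuous K)).isClosed
  have h6 : closure (psiMap K '' {w | ∃ h ∈ genSet T (k+1), h y = w}) ⊆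
      psiMap K '' closure {w | ∃ h ∈ genSet T (k+1), h y = w} :=
    closure_minimal (Set.image_mono subset_closure) horb_cpt
  obtain ⟨w, hw, hψw⟩ := h6 h5
  rwa [← psiMap_injective K hψw]

lemma Qset_zero_const {y : (Fin d → Bool) → X} (hy : y ∈ Qset T 0) :
    ∀ ε, y ε = y (fun _ => false) := by
  have hsub : QsetGen T 0 ⊆ {w : (Fin d → Bool) → X | ∀ ε, w ε = w (fun _ => false)} := by
    rintro w ⟨x, n, hn, hw⟩ ε
    have hn0 : n = 0 := funext fun i => hn i (Nat.zero_le _)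
    rw [hw ε, hw (fun _ => false), hn0, cubeMap_zero, cubeMap_zero]
  have hcl : IsClosed {w : (Fin d → Bool) → X | ∀ ε, w ε = w (fun _ => false)} := by
    have heq : {w : (Fin d → Bool) → X | ∀ ε, w ε = w (fun _ => false)} =
        ⋂ ε, {w : (Fin d → Bool) → X | w ε = w (fun _ => false)} := by
      ext w
      simp only [Set.mem_setOf_eq, Set.mem_iInter]
    rw [heq]
    exact isClosed_iInter fun ε => isClosed_eq (continuous_apply ε) (continuous_apply _)
  exact closure_minimal hsub hcl hy

lemma Pmin_zero (hmin : IsMinimalSystem T) :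
    ∀ y ∈ Qset T 0, ∀ z ∈ Qset T 0, z ∈ closure {w | ∃ h ∈ genSet T 0, h y = w} := by
  intro y hy z hz
  have hyc := Qset_zero_const T hy
  have hzc := Qset_zero_const T hz
  set x₀ := y (fun _ => false) with hx₀
  set z₀ := z (fun _ => false) with hz₀def
  have hz₀ : z₀ ∈ closure {w | ∃ g ∈ genGroup T, g x₀ = w} := hmin x₀ z₀
  set cmap : X → ((Fin d → Bool) → X) := fun x _ => x with hcmap
  have hccont : Continuous cmap := continuous_pi fun _ => continuous_id
  have himg : cmap '' {w | ∃ g ∈ genGroup T, g x₀ = w} ⊆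
      {w | ∃ h ∈ genSet T 0, h y = w} := by
    rintro _ ⟨_, ⟨g, hg, rfl⟩, rfl⟩
    refine ⟨bigHomeoM (fun ε => g * cubeMap T 0 ε), ⟨g, hg, 0, fun _ _ => rfl, rfl⟩, ?_⟩
    funext ε
    show (g * cubeMap T 0 ε) (y ε) = g x₀
    rw [cubeMap_zero, mul_one, hyc ε]
  have hzeq : z = cmap z₀ := funext fun ε => hzc ε
  rw [hzeq]
  exact closure_mono himg (image_closure_subset_closure_image hccont
    (Set.mem_image_of_mem _ hz₀))

lemma genSet_stable {k : ℕ} (hdk : d ≤ k) : genSet T (k+1) = genSet T k := by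
  ext h
  constructor <;> rintro ⟨g, hg, n, hn, rfl⟩ <;>
    exact ⟨g, hg, n, fun i hi => absurd hi (by have := i.isLt; omega), rfl⟩

lemma QsetGen_stable {k : ℕ} (hdk : d ≤ k) : QsetGen T (k+1) = QsetGen T k := by
  unfold QsetGen
  ext w
  constructor <;> rintro ⟨x, n, hn, hw⟩ <;>
    exact ⟨x, n, fun i hi => absurd hi (by have := i.isLt; omega), hw⟩

lemma Qset_stable {k : ℕ} (hdk : d ≤ k) : Qset T (k+1) = Qset T k := by
  unfold Qset
  rw [QsetGen_stable T hdk]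

lemma Pmin_all (hcomm : ∀ i j : Fin d, ∀ x : X, T i (T j x) = T j (T i x))
    (hmin : IsMinimalSystem T) (hX : Nonempty X) :
    ∀ k, ∀ y ∈ Qset T k, ∀ z ∈ Qset T k, z ∈ closure {w | ∃ h ∈ genSet T k, h y = w} := by
  intro k
  induction k with
  | zero => exact Pmin_zero T hmin
  | succ k IH =>
    by_cases hk : k < d
    · exact Pmin_succ T hcomm hX hk IH
    · have hdk : d ≤ k := Nat.not_lt.mp hk
      rw [Qset_stable T hdk, genSet_stable T hdk]
      exact IH

lemma cubes_eq_Qset : cubes T = Qset T d := by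
  unfold cubes Qset
  have heq : QsetGen T d = {y | ∃ (x : X) (n : Fin d → ℤ), ∀ ε, y ε = cubeMap T n ε x} := by
    unfold QsetGen
    ext w
    constructor
    · rintro ⟨x, n, _, h⟩
      exact ⟨x, n, h⟩
    · rintro ⟨x, n, h⟩
      exact ⟨x, n, fun i hi => absurd hi (by have := i.isLt; omega), h⟩
  rw [heq]
end Assemble


/-- **Minimality and distality of the cube system** (Proposition `CubeMin`).  If
`(X,T₁,…,T_d)` is a minimal `ℤ^d`-system, then the action of `𝒢_{T₁,…,T_d}` on
`Q_{T₁,…,T_d}(X)` is minimal; if moreover the system is distal, this action is distal. -/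
theorem cubes_minimal_and_distal {X : Type*} [MetricSpace X] [CompactSpace X] {d : ℕ}
    (T : Fin d → X ≃ₜ X)
    (hcomm : ∀ i j : Fin d, ∀ x : X, T i (T j x) = T j (T i x))
    (hmin : IsMinimalSystem T) :
    (∀ x ∈ cubes T, ∀ y ∈ cubes T,
        y ∈ closure {z : (Fin d → Bool) → X | ∃ g ∈ cubeGroup T, g x = z}) ∧
      (IsDistalSystem T → ∀ x ∈ cubes T, ∀ y ∈ cubes T, x ≠ y →
        ∃ δ > 0, ∀ g ∈ cubeGroup T, δ ≤ dist (g x) (g y)) := by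

  constructor
  · intro x hx y hy
    haveI hX : Nonempty X := ⟨x (fun _ => false)⟩
    have horb : {z | ∃ g ∈ cubeGroup T, g x = z} = {w | ∃ h ∈ genSet T d, h x = w} := by
      ext w
      constructor
      · rintro ⟨g, hg, rfl⟩
        exact ⟨g, cubeGroup_subset_genSet T hcomm hg, rfl⟩
      · rintro ⟨h, hh, rfl⟩
        exact ⟨h, genSet_subset_cubeGroup T hh, rfl⟩
    rw [horb]
    rw [cubes_eq_Qset] at hx hy
    exact Pmin_all T hcomm hmin hX d x hx y hy
  · intro hdist x _ y _ hxy
    obtain ⟨ε₀, hne⟩ := Function.ne_iff.mp hxy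
    obtain ⟨δ, hδ, hd⟩ := hdist _ _ hne
    refine ⟨δ, hδ, fun h hh => ?_⟩
    obtain ⟨g, hg, n, _, rfl⟩ := cubeGroup_subset_genSet T hcomm hh
    calc δ ≤ dist ((g * cubeMap T n ε₀) (x ε₀)) ((g * cubeMap T n ε₀) (y ε₀)) :=
          hd _ (Subgroup.mul_mem _ hg (cubeMap_mem_genGroup T n ε₀))
      _ = dist ((bigHomeoM (fun ε => g * cubeMap T n ε) x) ε₀)
            ((bigHomeoM (fun ε => g * cubeMap T n ε) y) ε₀) := rfl
      _ ≤ dist (bigHomeoM (fun ε => g * cubeMap T n ε) x)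
            (bigHomeoM (fun ε => g * cubeMap T n ε) y) :=
          dist_le_pi_dist _ _ ε₀
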